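/- arXiv:1709.05789 — 3 statements merged into one kernel-verified Lean document; each statement's English description precedes it below -/
import Mathlib

section
/- If A and B are n × n real correlation matrices (positive semidefinite with unit diagonal), then A^{1/2} ∘ B^{1/2} ≤ I in the Loewner order, i.e., I − A^{1/2} ∘ B^{1/2} is positive semidefinite. -/
open Matrix Finset

open scoped ComplexOrder in
/-- The positive semidefinite square root, as `Matrix.PosSemidef.sqrt` was defined in the older
Mathlib (removed since, in favour of `CFC.sqrt`). -/
noncomputable def Matrix.PosSemidef.sqrt {n 𝕜 : Type*} [Fintype n] [RCLike 𝕜] [DecidableEq n]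
    {A : Matrix n n 𝕜} (hA : A.PosSemidef) : Matrix n n 𝕜 :=
  hA.1.eigenvectorUnitary.1 * diagonal ((↑) ∘ (√·) ∘ hA.1.eigenvalues) *
  (star hA.1.eigenvectorUnitary : Matrix n n 𝕜)

lemma psd_sqrt_isHermitian {n : Type*} [Fintype n] [DecidableEq n] {A : Matrix n n ℝ}
    (hA : A.PosSemidef) : hA.sqrt.IsHermitian := by
  unfold Matrix.PosSemidef.sqrt
  have h := isHermitian_mul_mul_conjTranspose (hA.1.eigenvectorUnitary : Matrix n n ℝ)
    (isHermitian_diagonal ((↑) ∘ (√·) ∘ hA.1.eigenvalues : n → ℝ))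
  rw [← Matrix.star_eq_conjTranspose] at h
  exact h

lemma psd_sqrt_mul_self {n : Type*} [Fintype n] [DecidableEq n] {A : Matrix n n ℝ}
    (hA : A.PosSemidef) : hA.sqrt * hA.sqrt = A := by
  have hU : star (hA.1.eigenvectorUnitary : Matrix n n ℝ) * (hA.1.eigenvectorUnitary : Matrix n n ℝ)
      = 1 := Unitary.coe_star_mul_self _
  conv_rhs => rw [hA.1.spectral_theorem, Unitary.conjStarAlgAut_apply]
  unfold Matrix.PosSemidef.sqrt
  calc _ = (hA.1.eigenvectorUnitary : Matrix n n ℝ) *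
        (diagonal (RCLike.ofReal ∘ (√·) ∘ hA.1.eigenvalues : n → ℝ) *
          (star (hA.1.eigenvectorUnitary : Matrix n n ℝ) * (hA.1.eigenvectorUnitary : Matrix n n ℝ)) *
          diagonal (RCLike.ofReal ∘ (√·) ∘ hA.1.eigenvalues : n → ℝ)) *
        star (hA.1.eigenvectorUnitary : Matrix n n ℝ) := by simp only [Matrix.mul_assoc]
    _ = _ := by
      rw [hU, Matrix.mul_one, diagonal_mul_diagonal]
      congr 3
      ext i
      simp [Real.mul_self_sqrt (hA.eigenvalues_nonneg i)]

theorem sqrt_hadamard_sqrt_le_one {n : ℕ} (A B : Matrix (Fin n) (Fin n) ℝ)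
    (hA : A.PosSemidef) (hB : B.PosSemidef)
    (hdA : ∀ i, A i i = 1) (hdB : ∀ i, B i i = 1) :
    ((1 : Matrix (Fin n) (Fin n) ℝ) - Matrix.hadamard hA.sqrt hB.sqrt).PosSemidef := by
  set S := hA.sqrt with hSdef
  set T := hB.sqrt with hTdef
  have hSsym : ∀ i j, S j i = S i j := by
    intro i j
    show hA.sqrt j i = hA.sqrt i j
    simpa using (psd_sqrt_isHermitian hA).apply i j
  have hTsym : ∀ i j, T j i = T i j := by
    intro i j
    show hB.sqrt j i = hB.sqrt i j
    simpa using (psd_sqrt_isHermitian hB).apply i j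
  have hSrow : ∀ i, ∑ j, S i j ^ 2 = 1 := by
    intro i
    have h : (S * S) i i = A i i := by rw [psd_sqrt_mul_self hA]
    rw [Matrix.mul_apply] at h
    rw [hdA i] at h
    calc ∑ j, S i j ^ 2 = ∑ j, S i j * S j i := by
          refine Finset.sum_congr rfl fun j _ => ?_
          rw [hSsym i j, pow_two]
      _ = 1 := h
  have hTrow : ∀ i, ∑ j, T i j ^ 2 = 1 := by
    intro i
    have h : (T * T) i i = B i i := by rw [psd_sqrt_mul_self hB]
    rw [Matrix.mul_apply] at h
    rw [hdB i] at h
    calc ∑ j, T i j ^ 2 = ∑ j, T i j * T j i := by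
          refine Finset.sum_congr rfl fun j _ => ?_
          rw [hTsym i j, pow_two]
      _ = 1 := h
  refine Matrix.PosSemidef.of_dotProduct_mulVec_nonneg ?_ ?_
  · -- Hermitian
    ext i j
    simp [Matrix.conjTranspose_apply, Matrix.hadamard_apply, Matrix.one_apply,
      hSsym i j, hTsym i j, eq_comm (a := i) (b := j)]
  · intro x
    have hx : (star x : Fin n → ℝ) = x := by ext i; simp
    rw [hx, Matrix.sub_mulVec, Matrix.one_mulVec, dotProduct_sub]
    have key : x ⬝ᵥ (Matrix.hadamard S T *ᵥ x) ≤ x ⬝ᵥ x := by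
      have hexp : x ⬝ᵥ (Matrix.hadamard S T *ᵥ x)
          = ∑ p : Fin n × Fin n, (x p.1 * S p.1 p.2) * (T p.1 p.2 * x p.2) := by
        rw [Fintype.sum_prod_type]
        simp only [dotProduct, Matrix.mulVec, dotProduct, Matrix.hadamard_apply,
          Finset.mul_sum]
        refine Finset.sum_congr rfl fun i _ => Finset.sum_congr rfl fun j _ => ?_
        ring
      have hf : ∑ p : Fin n × Fin n, (x p.1 * S p.1 p.2) ^ 2 = x ⬝ᵥ x := by
        rw [Fintype.sum_prod_type]
        simp only [mul_pow, ← Finset.mul_sum, hSrow, mul_one]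
        simp [dotProduct, pow_two]
      have hg : ∑ p : Fin n × Fin n, (T p.1 p.2 * x p.2) ^ 2 = x ⬝ᵥ x := by
        rw [Fintype.sum_prod_type_right]
        simp only [mul_pow]
        have : ∀ j, ∑ i, T i j ^ 2 * x j ^ 2 = x j ^ 2 := by
          intro j
          rw [← Finset.sum_mul]
          have : ∑ i, T i j ^ 2 = 1 := by
            rw [Finset.sum_congr rfl fun i _ => by rw [hTsym j i]]
            exact hTrow j
          rw [this, one_mul]
        simp only [this]
        simp [dotProduct, pow_two]
      have cs := Finset.sum_mul_sq_le_sq_mul_sq Finset.univ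
        (fun p : Fin n × Fin n => x p.1 * S p.1 p.2)
        (fun p : Fin n × Fin n => T p.1 p.2 * x p.2)
      rw [hf, hg, ← hexp] at cs
      have hxx : (0:ℝ) ≤ x ⬝ᵥ x := by
        simp only [dotProduct]
        exact Finset.sum_nonneg fun i _ => mul_self_nonneg _
      nlinarith [cs, hxx]
    simpa using sub_nonneg.mpr key
end

section
/- Let A and B be m × n real matrices with unit ℓ₂-norm columns, and S ⊆ {1,…,n} with |S| = k ≤ m such that the eigenvalues of A_Sᵀ A_S and B_Sᵀ B_S lie in [1 − δ, 1 + δ], δ ∈ (0,1). Then (A_S ⊙ B_S)ᵀ(A_S ⊙ B_S) ≥ (1 − δ²) I_k in the Loewner order. -/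
open Matrix

/-- Columnwise Khatri-Rao product. -/
def khatriRao {m : ℕ} {ι : Type*} (A B : Matrix (Fin m) ι ℝ) :
    Matrix (Fin m × Fin m) ι ℝ :=
  fun p j => A p.1 j * B p.2 j

/-- Gram matrix of a Khatri-Rao product is the Hadamard product of Gram matrices. -/
lemma khatriRao_gram {m : ℕ} {ι : Type*} [Fintype ι] (X Y : Matrix (Fin m) ι ℝ) :
    (khatriRao X Y)ᵀ * khatriRao X Y = (Xᵀ * X).hadamard (Yᵀ * Y) := by
  ext i j
  simp only [mul_apply, hadamard_apply, transpose_apply, khatriRao,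
    Fintype.sum_prod_type, Finset.sum_mul_sum]
  exact Finset.sum_congr rfl fun a _ => Finset.sum_congr rfl fun b _ => by ring

/-- Schur product theorem over ℝ. -/
lemma posSemidef_hadamard {ι : Type*} [Fintype ι] [DecidableEq ι]
    {M N : Matrix ι ι ℝ} (hM : M.PosSemidef) (hN : N.PosSemidef) :
    (M.hadamard N).PosSemidef := by
  obtain ⟨X, hX⟩ : ∃ X : Matrix ι ι ℝ, M = Xᴴ * X := by
    open scoped MatrixOrder in
    simpa only [star_eq_conjTranspose] using CStarAlgebra.nonneg_iff_eq_star_mul_self.mp hM.nonneg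
  obtain ⟨Y, hY⟩ : ∃ Y : Matrix ι ι ℝ, N = Yᴴ * Y := by
    open scoped MatrixOrder in
    simpa only [star_eq_conjTranspose] using CStarAlgebra.nonneg_iff_eq_star_mul_self.mp hN.nonneg
  set L : Matrix (ι × ι) ι ℝ := fun p j => X p.1 j * Y p.2 j with hL
  have key : M.hadamard N = Lᴴ * L := by
    ext i j
    simp only [hX, hY, hadamard_apply, mul_apply, conjTranspose_apply,
      Fintype.sum_prod_type, Finset.sum_mul_sum, star_trivial]
    simp only [hL]
    exact Finset.sum_congr rfl fun a _ => Finset.sum_congr rfl fun b _ => by ring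
  rw [key]
  exact Matrix.posSemidef_conjTranspose_mul_self L

/-- A Hermitian real matrix whose spectrum is bounded below by `c` satisfies
`H - c • 1 ≥ 0`. -/
lemma posSemidef_sub_smul_one {ι : Type*} [Fintype ι] [DecidableEq ι]
    {H : Matrix ι ι ℝ} (hH : H.IsHermitian) {c : ℝ}
    (h : ∀ μ ∈ spectrum ℝ H, c ≤ μ) :
    (H - c • (1 : Matrix ι ι ℝ)).PosSemidef := by
  set U : Matrix ι ι ℝ := (hH.eigenvectorUnitary : Matrix ι ι ℝ) with hU
  have hUU : U * star U = 1 := by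
    simpa [hU] using (Unitary.mul_star_self_of_mem hH.eigenvectorUnitary.2)
  have key : H - c • (1 : Matrix ι ι ℝ)
      = U * diagonal (fun i => hH.eigenvalues i - c) * star U := by
    conv_lhs => rw [hH.spectral_theorem, Unitary.conjStarAlgAut_apply, ← hUU]
    have h1 : (c • (U * star U)) = U * (c • (1 : Matrix ι ι ℝ)) * star U := by
      rw [Matrix.mul_smul, Matrix.mul_one, Matrix.smul_mul]
    rw [h1, ← Matrix.sub_mul, ← Matrix.mul_sub]
    congr 1
    congr 1
    ext a b
    by_cases hab : a = b <;>
      simp [hab, Matrix.one_apply, Matrix.diagonal_apply]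
  rw [key, Matrix.star_eq_conjTranspose]
  refine (Matrix.posSemidef_diagonal_iff.mpr fun i => ?_).mul_mul_conjTranspose_same U
  have := h _ (hH.eigenvalues_mem_spectrum_real i)
  linarith

/-- Lower Loewner bound for the Gram matrix of the Khatri-Rao product of column
submatrices: `(A_S ⊙ B_S)ᵀ(A_S ⊙ B_S) ≥ (1 − δ²) I`. -/
theorem gram_khatriRao_submatrix_ge {m n k : ℕ} (A B : Matrix (Fin m) (Fin n) ℝ)
    (hAcol : ∀ j, ∑ i, (A i j) ^ 2 = 1) (hBcol : ∀ j, ∑ i, (B i j) ^ 2 = 1)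
    (S : Finset (Fin n)) (hS : S.card = k) (hk : k ≤ m)
    (δ : ℝ) (hδ : δ ∈ Set.Ioo (0 : ℝ) 1)
    (AS : Matrix (Fin m) {j // j ∈ S} ℝ)
    (hAS : AS = A.submatrix id (fun j : {j // j ∈ S} => (j : Fin n)))
    (BS : Matrix (Fin m) {j // j ∈ S} ℝ)
    (hBS : BS = B.submatrix id (fun j : {j // j ∈ S} => (j : Fin n)))
    (hGA : spectrum ℝ (ASᵀ * AS) ⊆ Set.Icc (1 - δ) (1 + δ))
    (hGB : spectrum ℝ (BSᵀ * BS) ⊆ Set.Icc (1 - δ) (1 + δ)) :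
    ((khatriRao AS BS)ᵀ * khatriRao AS BS -
      (1 - δ ^ 2) • (1 : Matrix {j // j ∈ S} {j // j ∈ S} ℝ)).PosSemidef := by
  set c : ℝ := 1 - δ with hc
  -- diagonal entries of the Gram matrices are 1
  have hGAdiag : ∀ j, (ASᵀ * AS) j j = 1 := by
    intro j
    simp only [mul_apply, transpose_apply, hAS, submatrix_apply, id]
    simpa [sq] using hAcol (j : Fin n)
  have hGBdiag : ∀ j, (BSᵀ * BS) j j = 1 := by
    intro j
    simp only [mul_apply, transpose_apply, hBS, submatrix_apply, id]
    simpa [sq] using hBcol (j : Fin n)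
  -- PSD of shifted Gram matrices
  have hApsd : (ASᵀ * AS - c • (1 : Matrix {j // j ∈ S} {j // j ∈ S} ℝ)).PosSemidef :=
    posSemidef_sub_smul_one (Matrix.isHermitian_conjTranspose_mul_self AS)
      (fun μ hμ => (hGA hμ).1)
  have hBpsd : (BSᵀ * BS - c • (1 : Matrix {j // j ∈ S} {j // j ∈ S} ℝ)).PosSemidef :=
    posSemidef_sub_smul_one (Matrix.isHermitian_conjTranspose_mul_self BS)
      (fun μ hμ => (hGB hμ).1)
  -- the key algebraic identity
  have key : (khatriRao AS BS)ᵀ * khatriRao AS BS -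
      (1 - δ ^ 2) • (1 : Matrix {j // j ∈ S} {j // j ∈ S} ℝ)
      = (ASᵀ * AS - c • 1).hadamard (BSᵀ * BS - c • 1) := by
    rw [khatriRao_gram]
    ext i j
    by_cases hij : i = j
    · subst hij
      simp only [Matrix.sub_apply, hadamard_apply, Matrix.smul_apply, one_apply_eq,
        hGAdiag, hGBdiag, smul_eq_mul, mul_one]
      ring
    · simp only [Matrix.sub_apply, hadamard_apply, Matrix.smul_apply, one_apply_ne hij,
        smul_eq_mul, mul_zero, sub_zero]
  rw [key]
  exact posSemidef_hadamard hApsd hBpsd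
end

section
/- Let A and B be m × n real matrices with unit ℓ₂-norm columns, and S ⊆ {1,…,n} with |S| = k ≤ m such that the eigenvalues of A_Sᵀ A_S and B_Sᵀ B_S lie in [1 − δ, 1 + δ], δ ∈ (0,1). Then (A_S ⊙ B_S)ᵀ(A_S ⊙ B_S) ≤ (1 + δ²) I_k in the Loewner order. -/
open Matrix

lemma col_sq_sum_le {ι : Type*} [Fintype ι] [DecidableEq ι] {M : Matrix ι ι ℝ}
    (hM : M.IsHermitian) {δ : ℝ}
    (h : spectrum ℝ M ⊆ Set.Icc (1-δ) (1+δ)) (j : ι) :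
    ∑ i, (M i j - (1 : Matrix ι ι ℝ) i j)^2 ≤ δ^2 := by
  set U : Matrix ι ι ℝ := (hM.eigenvectorUnitary : Matrix ι ι ℝ) with hUdef
  set d : ι → ℝ := hM.eigenvalues with hddef
  have hUU : U * star U = 1 := (Matrix.mem_unitaryGroup_iff).mp hM.eigenvectorUnitary.2
  have hUU' : star U * U = 1 := (Matrix.mem_unitaryGroup_iff').mp hM.eigenvectorUnitary.2
  have hspec : M = U * diagonal d * star U := by
    have := hM.spectral_theorem
    simpa using this
  have hD : diagonal (fun k => d k - 1) = diagonal d - 1 := by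
    rw [← diagonal_one, diagonal_sub]
  have hE : M - 1 = U * diagonal (fun k => d k - 1) * star U := by
    rw [hD, mul_sub, sub_mul, mul_one, hUU, ← hspec]
  have hEE : (M - 1) * (M - 1) = U * diagonal (fun k => (d k - 1)^2) * star U := by
    rw [hE]
    have hassoc : (U * diagonal (fun k => d k - 1) * star U) *
        (U * diagonal (fun k => d k - 1) * star U)
        = U * ((diagonal (fun k => d k - 1) * (star U * U)) * diagonal (fun k => d k - 1))
          * star U := by
      simp only [Matrix.mul_assoc]
    have hsq : (fun i => (d i - 1) * (d i - 1)) = fun k => (d k - 1)^2 := by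
      funext k; ring
    rw [hassoc, hUU', mul_one, diagonal_mul_diagonal, hsq]
  have hherm : (M - 1).IsHermitian := hM.sub isHermitian_one
  have hsym : ∀ i, (M - 1) j i = (M - 1) i j := by
    intro i
    conv_lhs => rw [← hherm.eq]
    simp [conjTranspose_apply]
  have hsum : ∑ i, (M i j - (1 : Matrix ι ι ℝ) i j)^2 = ((M - 1) * (M - 1)) j j := by
    rw [Matrix.mul_apply]
    apply Finset.sum_congr rfl
    intro i _
    rw [hsym i]
    simp [Matrix.sub_apply, sq]
  have hentry : ((U * diagonal (fun k => (d k - 1)^2) * star U : Matrix ι ι ℝ)) j j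
      = ∑ k, (d k - 1)^2 * (U j k)^2 := by
    rw [Matrix.mul_apply]
    apply Finset.sum_congr rfl
    intro k _
    rw [Matrix.mul_apply]
    simp only [diagonal_apply, star_apply, star_trivial, Finset.sum_ite_eq, Finset.sum_ite_eq',
      Finset.mem_univ, if_true, mul_ite, mul_zero]
    ring
  have hev : ∀ k, (d k - 1)^2 ≤ δ^2 := by
    intro k
    obtain ⟨h1, h2⟩ := h (hM.eigenvalues_mem_spectrum_real k)
    nlinarith
  have hnorm : ∑ k, (U j k)^2 = 1 := by
    have hjj := congrFun (congrFun hUU j) j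
    rw [Matrix.mul_apply] at hjj
    simp only [star_apply, star_trivial] at hjj
    rw [one_apply_eq] at hjj
    rw [← hjj]
    apply Finset.sum_congr rfl
    intro k _
    ring
  calc ∑ i, (M i j - (1 : Matrix ι ι ℝ) i j)^2 = ∑ k, (d k - 1)^2 * (U j k)^2 := by
        rw [hsum, hEE, hentry]
    _ ≤ ∑ k, δ^2 * (U j k)^2 := by
        apply Finset.sum_le_sum
        intro k _
        exact mul_le_mul_of_nonneg_right (hev k) (sq_nonneg _)
    _ = δ^2 := by rw [← Finset.mul_sum, hnorm, mul_one]

/-- Upper Loewner bound for the Gram matrix of the Khatri-Rao product of column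
submatrices: `(A_S ⊙ B_S)ᵀ(A_S ⊙ B_S) ≤ (1 + δ²) I`. -/
theorem gram_khatriRao_submatrix_le {m n k : ℕ} (A B : Matrix (Fin m) (Fin n) ℝ)
    (hAcol : ∀ j, ∑ i, (A i j) ^ 2 = 1) (hBcol : ∀ j, ∑ i, (B i j) ^ 2 = 1)
    (S : Finset (Fin n)) (hS : S.card = k) (hk : k ≤ m)
    (δ : ℝ) (hδ : δ ∈ Set.Ioo (0 : ℝ) 1)
    (AS : Matrix (Fin m) {j // j ∈ S} ℝ)
    (hAS : AS = A.submatrix id (fun j : {j // j ∈ S} => (j : Fin n)))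
    (BS : Matrix (Fin m) {j // j ∈ S} ℝ)
    (hBS : BS = B.submatrix id (fun j : {j // j ∈ S} => (j : Fin n)))
    (hGA : spectrum ℝ (ASᵀ * AS) ⊆ Set.Icc (1 - δ) (1 + δ))
    (hGB : spectrum ℝ (BSᵀ * BS) ⊆ Set.Icc (1 - δ) (1 + δ)) :
    ((1 + δ ^ 2) • (1 : Matrix {j // j ∈ S} {j // j ∈ S} ℝ) -
      (khatriRao AS BS)ᵀ * khatriRao AS BS).PosSemidef := by
  set GA : Matrix {j // j ∈ S} {j // j ∈ S} ℝ := ASᵀ * AS with hGAdef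
  set GB : Matrix {j // j ∈ S} {j // j ∈ S} ℝ := BSᵀ * BS with hGBdef
  have hGAh : GA.IsHermitian := by
    have := isHermitian_conjTranspose_mul_self AS
    rwa [conjTranspose_eq_transpose_of_trivial] at this
  have hGBh : GB.IsHermitian := by
    have := isHermitian_conjTranspose_mul_self BS
    rwa [conjTranspose_eq_transpose_of_trivial] at this
  set a : Matrix {j // j ∈ S} {j // j ∈ S} ℝ :=
    fun i j => GA i j - (1 : Matrix {j // j ∈ S} {j // j ∈ S} ℝ) i j with hadef
  set b : Matrix {j // j ∈ S} {j // j ∈ S} ℝ :=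
    fun i j => GB i j - (1 : Matrix {j // j ∈ S} {j // j ∈ S} ℝ) i j with hbdef
  have hacol : ∀ j, ∑ i, (a i j)^2 ≤ δ^2 := fun j => col_sq_sum_le hGAh hGA j
  have hbcol : ∀ j, ∑ i, (b i j)^2 ≤ δ^2 := fun j => col_sq_sum_le hGBh hGB j
  have hGBsym : ∀ i j, GB i j = GB j i := by
    intro i j
    conv_lhs => rw [← hGBh.eq]
    simp [conjTranspose_apply]
  have hbsym : ∀ i j, b i j = b j i := by
    intro i j
    simp only [hbdef, hGBsym i j, one_apply]
    by_cases h : i = j <;> simp [h, eq_comm]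
  have hGAdiag : ∀ i, GA i i = 1 := by
    intro i
    rw [hGAdef, Matrix.mul_apply]
    have h1 : ∀ p, ASᵀ i p * AS p i = (A p (i : Fin n))^2 := by
      intro p; rw [transpose_apply, hAS]; simp [submatrix_apply, sq]
    rw [Finset.sum_congr rfl fun p _ => h1 p]
    exact hAcol _
  have hGBdiag : ∀ i, GB i i = 1 := by
    intro i
    rw [hGBdef, Matrix.mul_apply]
    have h1 : ∀ p, BSᵀ i p * BS p i = (B p (i : Fin n))^2 := by
      intro p; rw [transpose_apply, hBS]; simp [submatrix_apply, sq]
    rw [Finset.sum_congr rfl fun p _ => h1 p]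
    exact hBcol _
  have hadiag : ∀ i, a i i = 0 := by intro i; simp [hadef, hGAdiag i]
  have hbdiag : ∀ i, b i i = 0 := by intro i; simp [hbdef, hGBdiag i]
  have hGram : ∀ i j, ((khatriRao AS BS)ᵀ * khatriRao AS BS) i j = GA i j * GB i j := by
    intro i j
    rw [Matrix.mul_apply, hGAdef, hGBdef, Matrix.mul_apply, Matrix.mul_apply,
      Finset.sum_mul_sum, Fintype.sum_prod_type]
    refine Finset.sum_congr rfl fun p _ => Finset.sum_congr rfl fun q _ => ?_
    simp only [khatriRao, transpose_apply]
    ring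
  have hentry : ∀ i j, GA i j * GB i j
      = (1 : Matrix {j // j ∈ S} {j // j ∈ S} ℝ) i j + a i j * b i j := by
    intro i j
    by_cases h : i = j
    · subst h
      simp [hadiag i, hbdiag i, hGAdiag i, hGBdiag i]
    · have ha' : GA i j = a i j := by simp [hadef, one_apply_ne h]
      have hb' : GB i j = b i j := by simp [hbdef, one_apply_ne h]
      rw [ha', hb', one_apply_ne h, zero_add]
  have hMij : ∀ i j, (((1 + δ ^ 2) • (1 : Matrix {j // j ∈ S} {j // j ∈ S} ℝ) -
      (khatriRao AS BS)ᵀ * khatriRao AS BS : Matrix {j // j ∈ S} {j // j ∈ S} ℝ)) i j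
      = δ^2 * (1 : Matrix {j // j ∈ S} {j // j ∈ S} ℝ) i j - a i j * b i j := by
    intro i j
    rw [Matrix.sub_apply, Matrix.smul_apply, hGram i j, hentry i j, smul_eq_mul]
    by_cases h : i = j
    · subst h; rw [one_apply_eq]; ring
    · rw [one_apply_ne h]; ring
  refine posSemidef_iff_dotProduct_mulVec.mpr ⟨?_, ?_⟩
  · have hK : ((khatriRao AS BS)ᵀ * khatriRao AS BS).IsHermitian := by
      have := isHermitian_conjTranspose_mul_self (khatriRao AS BS)
      rwa [conjTranspose_eq_transpose_of_trivial] at this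
    simp only [IsHermitian, conjTranspose_sub, conjTranspose_smul, conjTranspose_one,
      star_trivial, hK.eq]
  · intro x
    have hstar : star x = x := by funext i; simp
    rw [hstar]
    set X : ℝ := ∑ i, x i ^ 2 with hXdef
    set T : ℝ := ∑ i, ∑ j, (a i j * x j) * (b i j * x i) with hTdef
    have hXnn : 0 ≤ X := Finset.sum_nonneg fun i _ => sq_nonneg _
    have hform : dotProduct x
        (((1 + δ ^ 2) • (1 : Matrix {j // j ∈ S} {j // j ∈ S} ℝ) -
          (khatriRao AS BS)ᵀ * khatriRao AS BS) *ᵥ x)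
        = δ ^ 2 * X - T := by
      simp only [dotProduct, mulVec]
      have hrow : ∀ i, (∑ j, (((1 + δ ^ 2) • (1 : Matrix {j // j ∈ S} {j // j ∈ S} ℝ) -
          (khatriRao AS BS)ᵀ * khatriRao AS BS : Matrix {j // j ∈ S} {j // j ∈ S} ℝ)) i j * x j)
          = δ ^ 2 * x i - ∑ j, a i j * b i j * x j := by
        intro i
        have h2 : ∀ j, (((1 + δ ^ 2) • (1 : Matrix {j // j ∈ S} {j // j ∈ S} ℝ) -
            (khatriRao AS BS)ᵀ * khatriRao AS BS : Matrix {j // j ∈ S} {j // j ∈ S} ℝ)) i j * x j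
            = δ ^ 2 * ((1 : Matrix {j // j ∈ S} {j // j ∈ S} ℝ) i j * x j)
              - a i j * b i j * x j := by
          intro j
          rw [hMij i j]
          ring
        rw [Finset.sum_congr rfl fun j _ => h2 j]
        have hone : ∑ j, (1 : Matrix {j // j ∈ S} {j // j ∈ S} ℝ) i j * x j = x i := by
          simp [one_apply, Finset.sum_ite_eq, Finset.sum_ite_eq']
        rw [Finset.sum_sub_distrib, ← Finset.mul_sum, hone]
      rw [Finset.sum_congr rfl fun i _ => by rw [hrow i]]
      simp only [mul_sub, Finset.sum_sub_distrib, hTdef, hXdef]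
      congr 1
      · rw [Finset.mul_sum]
        exact Finset.sum_congr rfl fun i _ => by ring
      · refine Finset.sum_congr rfl fun i _ => ?_
        rw [Finset.mul_sum]
        exact Finset.sum_congr rfl fun j _ => by ring
    rw [hform]
    have hP : ∑ i, ∑ j, (a i j * x j)^2 ≤ δ^2 * X := by
      rw [Finset.sum_comm]
      calc ∑ j, ∑ i, (a i j * x j)^2 = ∑ j, (∑ i, (a i j)^2) * x j ^2 := by
            refine Finset.sum_congr rfl fun j _ => ?_
            rw [Finset.sum_mul]
            exact Finset.sum_congr rfl fun i _ => by ring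
        _ ≤ ∑ j, δ^2 * x j ^2 :=
            Finset.sum_le_sum fun j _ =>
              mul_le_mul_of_nonneg_right (hacol j) (sq_nonneg _)
        _ = δ^2 * X := by rw [hXdef, Finset.mul_sum]
    have hQ : ∑ i, ∑ j, (b i j * x i)^2 ≤ δ^2 * X := by
      calc ∑ i, ∑ j, (b i j * x i)^2 = ∑ i, (∑ j, (b j i)^2) * x i ^2 := by
            refine Finset.sum_congr rfl fun i _ => ?_
            rw [Finset.sum_mul]
            exact Finset.sum_congr rfl fun j _ => by rw [hbsym i j]; ring
        _ ≤ ∑ i, δ^2 * x i ^2 :=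
            Finset.sum_le_sum fun i _ =>
              mul_le_mul_of_nonneg_right (hbcol i) (sq_nonneg _)
        _ = δ^2 * X := by rw [hXdef, Finset.mul_sum]
    have hCS := Finset.sum_mul_sq_le_sq_mul_sq Finset.univ
      (fun p : {j // j ∈ S} × {j // j ∈ S} => a p.1 p.2 * x p.2)
      (fun p : {j // j ∈ S} × {j // j ∈ S} => b p.1 p.2 * x p.1)
    rw [Fintype.sum_prod_type] at hCS
    have hPnn : (0:ℝ) ≤ ∑ i, ∑ j, (a i j * x j)^2 :=
      Finset.sum_nonneg fun i _ => Finset.sum_nonneg fun j _ => sq_nonneg _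
    have hQnn : (0:ℝ) ≤ ∑ i, ∑ j, (b i j * x i)^2 :=
      Finset.sum_nonneg fun i _ => Finset.sum_nonneg fun j _ => sq_nonneg _
    have hT2 : T^2 ≤ (δ^2 * X) * (δ^2 * X) := by
      calc T^2 ≤ (∑ i, ∑ j, (a i j * x j)^2) * (∑ i, ∑ j, (b i j * x i)^2) := by
            rw [hTdef]
            convert hCS using 2
            · rfl
            all_goals simp [Fintype.sum_prod_type]
        _ ≤ (δ^2 * X) * (δ^2 * X) := by
            apply mul_le_mul hP hQ hQnn
            positivity
    nlinarith [sq_nonneg (δ^2 * X - T), sq_nonneg (δ^2 * X + T)]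
end
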